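/- For any finite set I of positive integers and any i ∈ I, the descent polynomial vanishes at i: d(I;i) = 0. -/

import Mathlib

/-- The descent set of a permutation of `Fin n`, with positions 1-indexed:
`i ∈ descSet n π` iff `1 ≤ i ≤ n-1` and `π_i > π_{i+1}` (1-indexed entries). -/
def descSet (n : ℕ) (π : Equiv.Perm (Fin n)) : Finset ℕ :=
  (Finset.range n).filter fun i =>
    ∃ h : 0 < i ∧ i < n, π ⟨i, h.2⟩ < π ⟨i - 1, by omega⟩

/-- `dA I n` is the number of permutations in `S_n` with descent set exactly `I`. -/
def dA (I : Finset ℕ) (n : ℕ) : ℕ :=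
  (Finset.univ.filter fun π : Equiv.Perm (Fin n) => descSet n π = I).card

noncomputable def buildPerm (n m : ℕ) (hmn : m + (n - m) = n) (S : Finset (Fin n))
    (hS : S.card = m) (hS' : Sᶜ.card = n - m) (σ : Equiv.Perm (Fin m)) : Equiv.Perm (Fin n) :=
  ((finCongr hmn.symm).trans finSumFinEquiv.symm).trans <|
  (Equiv.sumCongr (σ.trans (S.orderIsoOfFin hS).toEquiv) (Sᶜ.orderIsoOfFin hS').toEquiv).trans <|
  (Equiv.sumCongr (Equiv.refl _) (Equiv.subtypeEquivRight (fun x => Finset.mem_compl))).trans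
  (Equiv.sumCompl (· ∈ S))

lemma buildPerm_apply_lt (n m : ℕ) (hmn : m + (n - m) = n) (S : Finset (Fin n))
    (hS : S.card = m) (hS' : Sᶜ.card = n - m) (σ : Equiv.Perm (Fin m)) (i : Fin n)
    (hi : (i : ℕ) < m) :
    buildPerm n m hmn S hS hS' σ i = S.orderEmbOfFin hS (σ ⟨i, hi⟩) := by
  have h1 : finSumFinEquiv.symm (Fin.cast hmn.symm i) = Sum.inl ⟨i, hi⟩ := by
    rw [Equiv.symm_apply_eq]
    ext
    simp
  simp [buildPerm, finCongr_apply, h1, Finset.coe_orderIsoOfFin_apply]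

lemma buildPerm_apply_ge (n m : ℕ) (hmn : m + (n - m) = n) (S : Finset (Fin n))
    (hS : S.card = m) (hS' : Sᶜ.card = n - m) (σ : Equiv.Perm (Fin m)) (i : Fin n)
    (hi : m ≤ (i : ℕ)) :
    buildPerm n m hmn S hS hS' σ i = Sᶜ.orderEmbOfFin hS' ⟨(i : ℕ) - m, by omega⟩ := by
  have h1 : finSumFinEquiv.symm (Fin.cast hmn.symm i) =
      Sum.inr ⟨(i : ℕ) - m, by omega⟩ := by
    rw [Equiv.symm_apply_eq]
    ext
    simp
    omega
  simp [buildPerm, finCongr_apply, h1, Finset.coe_orderIsoOfFin_apply]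

lemma mem_descSet {n : ℕ} (π : Equiv.Perm (Fin n)) {x : ℕ} (h0 : 0 < x) (h1 : x < n) :
    x ∈ descSet n π ↔ π ⟨x, h1⟩ < π ⟨x - 1, by omega⟩ := by
  unfold descSet
  simp only [Finset.mem_filter, Finset.mem_range]
  constructor
  · rintro ⟨-, h, hlt⟩
    exact hlt
  · intro hlt
    exact ⟨h1, ⟨h0, h1⟩, hlt⟩

lemma mem_descSet_bounds {n : ℕ} {π : Equiv.Perm (Fin n)} {x : ℕ} (hx : x ∈ descSet n π) :
    0 < x ∧ x < n := by
  unfold descSet at hx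
  simp only [Finset.mem_filter, Finset.mem_range] at hx
  exact hx.2.1

lemma descSet_buildPerm (n m : ℕ) (hmn : m + (n - m) = n) (S : Finset (Fin n))
    (hS : S.card = m) (hS' : Sᶜ.card = n - m) (σ : Equiv.Perm (Fin m)) :
    descSet n (buildPerm n m hmn S hS hS' σ) \ {m} = descSet m σ := by
  ext x
  simp only [Finset.mem_sdiff, Finset.mem_singleton]
  constructor
  · rintro ⟨hx, hxm⟩
    obtain ⟨h0, h1⟩ := mem_descSet_bounds hx
    rcases Nat.lt_or_ge x m with hlt | hge
    · rw [mem_descSet _ h0 h1] at hx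
      rw [buildPerm_apply_lt n m hmn S hS hS' σ _ hlt,
        buildPerm_apply_lt n m hmn S hS hS' σ _ (show ((⟨x-1, by omega⟩ : Fin n) : ℕ) < m by
          simp; omega)] at hx
      rw [mem_descSet _ h0 hlt]
      exact (OrderEmbedding.lt_iff_lt (S.orderEmbOfFin hS)).mp hx
    · exfalso
      have hgt : m < x := by omega
      rw [mem_descSet _ h0 h1] at hx
      rw [buildPerm_apply_ge n m hmn S hS hS' σ _ (by simpa using hge),
        buildPerm_apply_ge n m hmn S hS hS' σ _ (show m ≤ ((⟨x-1, by omega⟩ : Fin n) : ℕ) by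
          simp; omega)] at hx
      have := (OrderEmbedding.lt_iff_lt (Sᶜ.orderEmbOfFin hS')).mp hx
      rw [Fin.lt_iff_val_lt_val] at this
      simp at this
      omega
  · intro hx
    obtain ⟨h0, h1⟩ := mem_descSet_bounds hx
    have h1n : x < n := by omega
    refine ⟨?_, by omega⟩
    rw [mem_descSet _ h0 h1n]
    rw [buildPerm_apply_lt n m hmn S hS hS' σ _ (show ((⟨x, h1n⟩ : Fin n) : ℕ) < m from h1),
      buildPerm_apply_lt n m hmn S hS hS' σ _ (show ((⟨x-1, by omega⟩ : Fin n) : ℕ) < m by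
        simp; omega)]
    rw [OrderEmbedding.lt_iff_lt]
    rw [mem_descSet _ h0 h1] at hx
    exact hx

def blockS (n m : ℕ) (hm : m ≤ n) (π : Equiv.Perm (Fin n)) : Finset (Fin n) :=
  Finset.image (fun i : Fin m => π (Fin.castLE hm i)) Finset.univ

lemma card_blockS (n m : ℕ) (hm : m ≤ n) (π : Equiv.Perm (Fin n)) :
    (blockS n m hm π).card = m := by
  rw [blockS, Finset.card_image_of_injective _
    (show Function.Injective (fun i : Fin m => π (Fin.castLE hm i)) from
      fun i j h => Fin.castLE_injective hm (π.injective h))]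
  simp

noncomputable def patt (n m : ℕ) (hm : m ≤ n) (π : Equiv.Perm (Fin n)) :
    Equiv.Perm (Fin m) :=
  Equiv.ofBijective
    (fun i => ((blockS n m hm π).orderIsoOfFin (card_blockS n m hm π)).symm
      ⟨π (Fin.castLE hm i), Finset.mem_image_of_mem _ (Finset.mem_univ i)⟩)
    (Finite.injective_iff_bijective.mp (by
      intro i j hij
      have := congrArg (((blockS n m hm π).orderIsoOfFin (card_blockS n m hm π))) hij
      simp only [OrderIso.apply_symm_apply] at this
      rw [Subtype.ext_iff] at this
      simp only at this
      exact Fin.castLE_injective hm (π.injective this)))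

lemma oE_patt (n m : ℕ) (hm : m ≤ n) (π : Equiv.Perm (Fin n)) (i : Fin m) :
    (blockS n m hm π).orderEmbOfFin (card_blockS n m hm π) (patt n m hm π i) =
      π (Fin.castLE hm i) := by
  rw [← Finset.coe_orderIsoOfFin_apply]
  simp [patt]

lemma card_compl_blockS (n m : ℕ) (hm : m ≤ n) (π : Equiv.Perm (Fin n)) :
    (blockS n m hm π)ᶜ.card = n - m := by
  rw [Finset.card_compl, card_blockS]
  simp

lemma mono_of_tail (n m : ℕ) (π : Equiv.Perm (Fin n))
    (htail : ∀ x, m < x → x < n → x ∉ descSet n π) :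
    ∀ b a : ℕ, m ≤ a → ∀ (hab : a < b) (hb : b < n), π ⟨a, by omega⟩ < π ⟨b, hb⟩ := by
  have step : ∀ x : ℕ, m ≤ x → ∀ h : x + 1 < n,
      π ⟨x, by omega⟩ < π ⟨x + 1, h⟩ := by
    intro x hx h
    have hnd := htail (x + 1) (by omega) h
    rw [mem_descSet _ (by omega) h] at hnd
    push_neg at hnd
    have hne : π ⟨x + 1, h⟩ ≠ π ⟨x, by omega⟩ := fun hc => by
      have := π.injective hc
      simp [Fin.ext_iff] at this
    have hmk : (⟨x + 1 - 1, by omega⟩ : Fin n) = ⟨x, by omega⟩ := by ext; simp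
    rw [hmk] at hnd
    exact lt_of_le_of_ne hnd (Ne.symm hne)
  have mono : ∀ b a : ℕ, m ≤ a → ∀ (hab : a < b) (hb : b < n),
      π ⟨a, by omega⟩ < π ⟨b, hb⟩ := by
    intro b
    induction b with
    | zero => exact fun a _ hab _ => absurd hab (Nat.not_lt_zero a)
    | succ c ih =>
      intro a ha hab hb
      rcases eq_or_lt_of_le (Nat.lt_succ_iff.mp hab) with hac | hac
      · subst hac
        exact step a ha hb
      · exact (ih a ha hac (by omega)).trans (step c (by omega) hb)
  exact mono

lemma buildPerm_recover (n m : ℕ) (hm : m ≤ n) (π : Equiv.Perm (Fin n))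
    (htail : ∀ x, m < x → x < n → x ∉ descSet n π) :
    buildPerm n m (by omega) (blockS n m hm π) (card_blockS n m hm π)
      (card_compl_blockS n m hm π) (patt n m hm π) = π := by
  have mono := mono_of_tail n m π htail
  apply Equiv.ext
  intro i
  rcases Nat.lt_or_ge (i : ℕ) m with hi | hi
  · rw [buildPerm_apply_lt n m (by omega) _ _ _ _ i hi, oE_patt]
    exact congrArg π (by ext; simp)
  · rw [buildPerm_apply_ge n m (by omega) _ _ _ _ i hi]
    have hmono : StrictMono (fun j : Fin (n - m) => π ⟨m + (j : ℕ), by omega⟩) := by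
      intro j k hjk
      exact mono (m + (k : ℕ)) (m + (j : ℕ)) (by omega) (by omega) (by omega)
    have hfs : ∀ j : Fin (n - m),
        π ⟨m + (j : ℕ), by omega⟩ ∈ (blockS n m hm π)ᶜ := by
      intro j
      rw [Finset.mem_compl, blockS, Finset.mem_image]
      rintro ⟨a, -, heq⟩
      have := π.injective heq
      rw [Fin.ext_iff] at this
      simp at this
      omega
    have hfeq := Finset.orderEmbOfFin_unique (card_compl_blockS n m hm π) hfs hmono
    have := congrFun hfeq.symm ⟨(i : ℕ) - m, by omega⟩
    rw [this]
    exact congrArg π (by ext; simp; omega)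

lemma oE_cancel {n m : ℕ} {S T : Finset (Fin n)} (hST : S = T) (h : S.card = m)
    (h' : T.card = m) {x y : Fin m}
    (hxy : S.orderEmbOfFin h x = T.orderEmbOfFin h' y) : x = y := by
  subst hST
  exact (S.orderEmbOfFin h).injective hxy

lemma blockS_buildPerm (n m : ℕ) (hm : m ≤ n) (hmn : m + (n - m) = n) (S : Finset (Fin n))
    (hS : S.card = m) (hS' : Sᶜ.card = n - m) (σ : Equiv.Perm (Fin m)) :
    blockS n m hm (buildPerm n m hmn S hS hS' σ) = S := by
  apply Finset.eq_of_subset_of_card_le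
  · intro x hx
    rw [blockS, Finset.mem_image] at hx
    obtain ⟨i, -, rfl⟩ := hx
    rw [buildPerm_apply_lt n m hmn S hS hS' σ _ (by simpa using i.isLt)]
    exact Finset.orderEmbOfFin_mem S hS _
  · rw [hS, card_blockS]

lemma patt_buildPerm (n m : ℕ) (hm : m ≤ n) (hmn : m + (n - m) = n) (S : Finset (Fin n))
    (hS : S.card = m) (hS' : Sᶜ.card = n - m) (σ : Equiv.Perm (Fin m)) :
    patt n m hm (buildPerm n m hmn S hS hS' σ) = σ := by
  apply Equiv.ext
  intro i
  have h1 := oE_patt n m hm (buildPerm n m hmn S hS hS' σ) i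
  rw [buildPerm_apply_lt n m hmn S hS hS' σ _ (by simpa using i.isLt)] at h1
  have h2 : σ ⟨((Fin.castLE hm i : Fin n) : ℕ), by simpa using i.isLt⟩ = σ i := by
    congr 1
  rw [h2] at h1
  exact oE_cancel (blockS_buildPerm n m hm hmn S hS hS' σ) _ hS h1

lemma descSet_one (n : ℕ) : descSet n (1 : Equiv.Perm (Fin n)) = ∅ := by
  ext x
  simp only [Finset.notMem_empty, iff_false]
  intro hx
  obtain ⟨h0, h1⟩ := mem_descSet_bounds hx
  rw [mem_descSet _ h0 h1] at hx
  simp only [Equiv.Perm.coe_one, id_eq, Fin.mk_lt_mk] at hx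
  omega

lemma dA_empty (n : ℕ) : dA ∅ n = 1 := by
  rw [dA]
  convert Finset.card_singleton (1 : Equiv.Perm (Fin n))
  ext π
  simp only [Finset.mem_filter, Finset.mem_univ, true_and, Finset.mem_singleton]
  constructor
  · intro hπ
    have mono := mono_of_tail n 0 π (by intro x _ _ hc; rw [hπ] at hc; simp at hc)
    have hmono : StrictMono ⇑π := by
      intro a b hab
      have := mono (b : ℕ) (a : ℕ) (Nat.zero_le _) (by exact hab) b.isLt
      simpa using this
    have hcard : (Finset.univ : Finset (Fin n)).card = n := by simp
    have h1 := Finset.orderEmbOfFin_unique hcard (f := ⇑π) (fun x => Finset.mem_univ _) hmono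
    have h2 := Finset.orderEmbOfFin_unique hcard (f := ⇑(1 : Equiv.Perm (Fin n)))
      (fun x => Finset.mem_univ _) (by intro a b hab; simpa using hab)
    apply Equiv.ext
    intro x
    rw [show π x = _ from congrFun h1 x, show (1 : Equiv.Perm (Fin n)) x = _ from congrFun h2 x]
  · rintro rfl
    exact descSet_one n

lemma dA_eq_zero {I : Finset ℕ} {n i : ℕ} (hi : i ∈ I) (hni : n ≤ i) : dA I n = 0 := by
  rw [dA, Finset.card_eq_zero, Finset.filter_eq_empty_iff]
  intro π _ hc
  rw [← hc] at hi
  obtain ⟨-, h1⟩ := mem_descSet_bounds hi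
  omega

lemma counting (I : Finset ℕ) (h0 : 0 ∉ I) (hne : I.Nonempty) (n : ℕ) (hn : I.sup id ≤ n) :
    n.choose (I.sup id) * dA (I.erase (I.sup id)) (I.sup id) =
      dA I n + dA (I.erase (I.sup id)) n := by
  set m := I.sup id with hmdef
  have hmI : m ∈ I := by
    have h1 := I.max'_mem hne
    rwa [Finset.max'_eq_sup', Finset.sup'_eq_sup] at h1
  have hsup : ∀ j ∈ I, j ≤ m := fun j hj => Finset.le_sup (f := id) hj
  have hL : n.choose m * dA (I.erase m) m =
      ((Finset.powersetCard m (Finset.univ : Finset (Fin n))) ×ˢ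
        (Finset.univ.filter fun σ : Equiv.Perm (Fin m) => descSet m σ = I.erase m)).card := by
    rw [Finset.card_product, Finset.card_powersetCard, Finset.card_univ, Fintype.card_fin, dA]
  have hR : dA I n + dA (I.erase m) n =
      (Finset.univ.filter fun π : Equiv.Perm (Fin n) =>
        descSet n π = I ∨ descSet n π = I.erase m).card := by
    rw [Finset.filter_or, Finset.card_union_of_disjoint, dA, dA]
    rw [Finset.disjoint_filter]
    intro π _ h1 h2
    rw [h1] at h2
    exact (Finset.notMem_erase m I) (h2 ▸ hmI)
  rw [hL, hR]
  apply Finset.card_bij'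
    (i := fun p hp => buildPerm n m (by omega) p.1
      ((Finset.mem_powersetCard.mp (Finset.mem_product.mp hp).1).2)
      (by rw [Finset.card_compl, (Finset.mem_powersetCard.mp (Finset.mem_product.mp hp).1).2]
          simp) p.2)
    (j := fun π hπ => (blockS n m hn π, patt n m hn π))
  case hi =>
    intro p hp
    simp only [Finset.mem_filter, Finset.mem_univ, true_and]
    have hp2 : descSet m p.2 = I.erase m :=
      (Finset.mem_filter.mp (Finset.mem_product.mp hp).2).2
    have hd := descSet_buildPerm n m (by omega) p.1
      ((Finset.mem_powersetCard.mp (Finset.mem_product.mp hp).1).2)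
      (by rw [Finset.card_compl, (Finset.mem_powersetCard.mp (Finset.mem_product.mp hp).1).2]
          simp) p.2
    rw [hp2] at hd
    set bp := buildPerm n m (by omega : m + (n - m) = n) p.1
      ((Finset.mem_powersetCard.mp (Finset.mem_product.mp hp).1).2)
      (by rw [Finset.card_compl, (Finset.mem_powersetCard.mp (Finset.mem_product.mp hp).1).2]
          simp) p.2 with hbp
    by_cases hmem : m ∈ descSet n bp
    · left
      have h1 : descSet n bp = insert m (descSet n bp \ {m}) := by
        rw [← Finset.erase_eq, Finset.insert_erase hmem]
      rw [h1, hd, Finset.insert_erase hmI]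
    · right
      rw [← hd, ← Finset.erase_eq, Finset.erase_eq_of_notMem hmem]
  case hj =>
    intro π hπ
    simp only [Finset.mem_filter, Finset.mem_univ, true_and] at hπ
    have htail : ∀ x, m < x → x < n → x ∉ descSet n π := by
      intro x hx _ hc
      rcases hπ with h | h
      · rw [h] at hc
        exact absurd (hsup x hc) (by omega)
      · rw [h] at hc
        exact absurd (hsup x (Finset.mem_of_mem_erase hc)) (by omega)
    rw [Finset.mem_product]
    constructor
    · rw [Finset.mem_powersetCard]
      exact ⟨Finset.subset_univ _, card_blockS n m hn π⟩
    · simp only [Finset.mem_filter, Finset.mem_univ, true_and]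
      have hrec := buildPerm_recover n m hn π htail
      have hd := descSet_buildPerm n m (by omega) (blockS n m hn π)
        (card_blockS n m hn π) (card_compl_blockS n m hn π) (patt n m hn π)
      rw [hrec] at hd
      rw [← hd]
      rcases hπ with h | h
      · rw [h, Finset.erase_eq]
      · rw [h, ← Finset.erase_eq, Finset.erase_eq_of_notMem (Finset.notMem_erase m I)]
  case left_inv =>
    intro p hp
    have h1 := blockS_buildPerm n m hn (by omega) p.1
      ((Finset.mem_powersetCard.mp (Finset.mem_product.mp hp).1).2)
      (by rw [Finset.card_compl, (Finset.mem_powersetCard.mp (Finset.mem_product.mp hp).1).2]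
          simp) p.2
    have h2 := patt_buildPerm n m hn (by omega) p.1
      ((Finset.mem_powersetCard.mp (Finset.mem_product.mp hp).1).2)
      (by rw [Finset.card_compl, (Finset.mem_powersetCard.mp (Finset.mem_product.mp hp).1).2]
          simp) p.2
    exact Prod.ext h1 h2
  case right_inv =>
    intro π hπ
    simp only [Finset.mem_filter, Finset.mem_univ, true_and] at hπ
    have htail : ∀ x, m < x → x < n → x ∉ descSet n π := by
      intro x hx _ hc
      rcases hπ with h | h
      · rw [h] at hc
        exact absurd (hsup x hc) (by omega)
      · rw [h] at hc
        exact absurd (hsup x (Finset.mem_of_mem_erase hc)) (by omega)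
    exact buildPerm_recover n m hn π htail

lemma sup_mem_of_nonempty {I : Finset ℕ} (hne : I.Nonempty) : I.sup id ∈ I := by
  have h1 := I.max'_mem hne
  rwa [Finset.max'_eq_sup', Finset.sup'_eq_sup] at h1

noncomputable def descPoly : Finset ℕ → Polynomial ℚ :=
  Finset.strongInduction fun I ih =>
    if h : I.Nonempty then
      Polynomial.C ((dA (I.erase (I.sup id)) (I.sup id) : ℚ) / (I.sup id).factorial) *
          descPochhammer ℚ (I.sup id) -
        ih (I.erase (I.sup id)) (Finset.erase_ssubset (sup_mem_of_nonempty h))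
    else 1

lemma descPoly_eq (I : Finset ℕ) (h : I.Nonempty) :
    descPoly I =
      Polynomial.C ((dA (I.erase (I.sup id)) (I.sup id) : ℚ) / (I.sup id).factorial) *
          descPochhammer ℚ (I.sup id) - descPoly (I.erase (I.sup id)) := by
  rw [descPoly, Finset.strongInduction_eq]
  simp [h]

lemma descPoly_empty : descPoly ∅ = 1 := by
  rw [descPoly, Finset.strongInduction_eq]
  simp

lemma sup_erase_lt {I : Finset ℕ} (h0 : 0 ∉ I) (hne : I.Nonempty) :
    (I.erase (I.sup id)).sup id < I.sup id := by
  have hmI := sup_mem_of_nonempty hne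
  have hm1 : 0 < I.sup id := Nat.pos_of_ne_zero (by rintro h; rw [h] at hmI; exact h0 hmI)
  rw [Finset.sup_lt_iff (by simpa using hm1)]
  intro j hj
  have := Finset.le_sup (f := id) (Finset.mem_of_mem_erase hj)
  have hne' := Finset.ne_of_mem_erase hj
  simp only [id_eq] at this ⊢
  omega

lemma descPoly_eval (I : Finset ℕ) (h0 : 0 ∉ I) :
    ∀ n : ℕ, I.sup id < n → (descPoly I).eval (n : ℚ) = dA I n := by
  induction I using Finset.strongInductionOn with
  | _ I ih =>
    intro n hn
    rcases I.eq_empty_or_nonempty with rfl | hne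
    · rw [descPoly_empty, dA_empty]
      simp
    · have hmI := sup_mem_of_nonempty hne
      set m := I.sup id with hmdef
      have hsub : I.erase m ⊂ I := Finset.erase_ssubset hmI
      have h0' : 0 ∉ I.erase m := fun hc => h0 (Finset.mem_of_mem_erase hc)
      have hlt := sup_erase_lt h0 hne
      rw [← hmdef] at hlt
      rw [descPoly_eq I hne]
      simp only [Polynomial.eval_sub, Polynomial.eval_mul, Polynomial.eval_C]
      rw [descPochhammer_eval_eq_descFactorial, ih _ hsub h0' n (by omega)]
      have hcount := counting I h0 hne n (by omega)
      rw [← hmdef] at hcount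
      have hc' := congrArg (fun k : ℕ => (k : ℚ)) hcount
      push_cast at hc'
      have hfac : ((m.factorial : ℚ)) ≠ 0 := Nat.cast_ne_zero.mpr m.factorial_ne_zero
      rw [Nat.descFactorial_eq_factorial_mul_choose]
      rw [← hmdef]
      field_simp
      push_cast
      linear_combination (m.factorial : ℚ) * hc'
  termination_by I => I.card

lemma descPoly_root (I : Finset ℕ) (h0 : 0 ∉ I) :
    ∀ i ∈ I, (descPoly I).eval (i : ℚ) = 0 := by
  induction I using Finset.strongInductionOn with
  | _ I ih =>
    intro i hi
    have hne : I.Nonempty := ⟨i, hi⟩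
    set m := I.sup id with hmdef
    have hmI := sup_mem_of_nonempty hne
    have hsub : I.erase m ⊂ I := Finset.erase_ssubset hmI
    have h0' : 0 ∉ I.erase m := fun hc => h0 (Finset.mem_of_mem_erase hc)
    have hlt := sup_erase_lt h0 hne
    rw [← hmdef] at hlt
    rw [descPoly_eq I hne]
    simp only [Polynomial.eval_sub, Polynomial.eval_mul, Polynomial.eval_C]
    rw [descPochhammer_eval_eq_descFactorial, ← hmdef]
    rcases eq_or_ne i m with heq | hne'
    · rw [heq, Nat.descFactorial_self,
        descPoly_eval (I.erase m) h0' m hlt]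
      have hfac : ((m.factorial : ℚ)) ≠ 0 := Nat.cast_ne_zero.mpr m.factorial_ne_zero
      field_simp
      simp
    · have him : i < m := lt_of_le_of_ne (Finset.le_sup (f := id) hi) hne'
      rw [Nat.descFactorial_eq_zero_iff_lt.2 him,
        ih (I.erase m) hsub h0' i (Finset.mem_erase.mpr ⟨hne', hi⟩)]
      simp

/-- Theorem 4.1: every element of `I` is a root of the descent polynomial. -/
theorem stmt_12 (I : Finset ℕ) (h0 : 0 ∉ I) (p : Polynomial ℚ)
    (hp : ∀ n : ℕ, I.sup id < n → p.eval (n : ℚ) = dA I n) :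
    ∀ i ∈ I, p.eval (i : ℚ) = 0 := by
  have hpD : p = descPoly I := by
    apply Polynomial.eq_of_infinite_eval_eq
    apply Set.infinite_of_injective_forall_mem
      (f := fun k : ℕ => ((I.sup id + 1 + k : ℕ) : ℚ))
    · intro a b hab
      simp only [Nat.cast_inj] at hab
      omega
    · intro k
      simp only [Set.mem_setOf_eq]
      rw [hp _ (by omega), descPoly_eval I h0 _ (by omega)]
  intro i hi
  rw [hpD]
  exact descPoly_root I h0 i hi
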